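/- arXiv:1810.07358 — 3 statements merged into one kernel-verified Lean document; each statement's English description precedes it below -/
import Mathlib

section
/- The set A = {2, 4, 5, 9, 11, 13, 14, 16, 17, 19, 20, 21, 22, 23, 24, 25, 26, 28, 30, 31, 33, 34, 36, 37, 38, 40, 41, 42, 43, 44, 46, 47, 49, 52, 55, 56, 57, 61, 65, 66, 69, 70, 71, 72, 73, 76, 77, 80, 82, 83, 85, 86, 87, 88, 89, 92, 95, 96, 97, 99} is an MSTD set, i.e. |A+A| > |A-A|. -/
set_option maxRecDepth 10000

open Pointwise

private def Aset : Finset ℤ := {2, 4, 5, 9, 11, 13, 14, 16, 17, 19, 20, 21, 22, 23, 24, 25, 26, 28, 30, 31, 33, 34, 36, 37, 38, 40, 41, 42, 43, 44, 46, 47, 49, 52, 55, 56, 57, 61, 65, 66, 69, 70, 71, 72, 73, 76, 77, 80, 82, 83, 85, 86, 87, 88, 89, 92, 95, 96, 97, 99}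

private lemma hbd : ∀ x ∈ Aset, 2 ≤ x ∧ x ≤ 99 := by decide

private lemma hne : ∀ x ∈ Aset, x - 89 ∉ Aset ∧ x - 96 ∉ Aset := by decide

private lemma hdiff_sub : Aset - Aset ⊆ Finset.Icc (-97 : ℤ) 97 \ {-96, -89, 89, 96} := by
  intro x hx
  rw [Finset.mem_sub] at hx
  obtain ⟨a, ha, b, hb, rfl⟩ := hx
  obtain ⟨ha1, ha2⟩ := hbd a ha
  obtain ⟨hb1, hb2⟩ := hbd b hb
  rw [Finset.mem_sdiff, Finset.mem_Icc]
  refine ⟨⟨by linarith, by linarith⟩, ?_⟩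
  simp only [Finset.mem_insert, Finset.mem_singleton]
  push_neg
  refine ⟨?_, ?_, ?_, ?_⟩
  · intro h; exact (hne b hb).2 (by rw [show b - 96 = a from by linarith]; exact ha)
  · intro h; exact (hne b hb).1 (by rw [show b - 89 = a from by linarith]; exact ha)
  · intro h; exact (hne a ha).1 (by rw [show a - 89 = b from by linarith]; exact hb)
  · intro h; exact (hne a ha).2 (by rw [show a - 96 = b from by linarith]; exact hb)

private lemma hupper : (Aset - Aset).card ≤ 191 := by
  refine le_trans (Finset.card_le_card hdiff_sub) ?_
  rw [Finset.card_sdiff_of_subset (by decide)]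
  rw [Int.card_Icc]
  decide

private def Cset : Finset ℤ := {2, 99, 20, 97, 9, 70, 4, 95, 5}

private lemma hCsub : Cset ⊆ Aset := by decide

private lemma hcard192 : (Aset + Cset).card = 192 := by decide

private lemma hlower : 192 ≤ (Aset + Aset).card := by
  rw [← hcard192]
  exact Finset.card_le_card (Finset.add_subset_add_left hCsub)

theorem stmt_2 :
    let A : Finset ℤ := {2, 4, 5, 9, 11, 13, 14, 16, 17, 19, 20, 21, 22, 23, 24, 25, 26, 28, 30, 31, 33, 34, 36, 37, 38, 40, 41, 42, 43, 44, 46, 47, 49, 52, 55, 56, 57, 61, 65, 66, 69, 70, 71, 72, 73, 76, 77, 80, 82, 83, 85, 86, 87, 88, 89, 92, 95, 96, 97, 99}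
    (A + A).card > (A - A).card := by
  intro A
  exact lt_of_le_of_lt hupper (lt_of_lt_of_le (by norm_num) hlower)
end

section
/- The set A = {0, 1, 3, 7, 9, 10, 13, 14, 16, 17, 18, 19, 22, 23, 24, 25, 26, 27, 28, 29, 30, 31, 32, 34, 35, 38, 39, 40, 41, 42, 43, 45, 46, 47, 48, 49, 54, 55, 56, 57, 58, 59, 60, 61, 64, 65, 67, 68, 69, 70, 71, 73, 75, 76, 78, 79, 80, 81, 82, 83, 85, 87, 89, 90, 91, 92, 95, 97, 98, 99}, which has cardinality 70, is an MSTD set, i.e. |A+A| > |A-A|. -/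
open Pointwise
set_option maxRecDepth 1000000


private lemma stmt3_aux :
    let A : Finset ℤ := {0, 1, 3, 7, 9, 10, 13, 14, 16, 17, 18, 19, 22, 23, 24, 25, 26, 27, 28, 29, 30, 31, 32, 34, 35, 38, 39, 40, 41, 42, 43, 45, 46, 47, 48, 49, 54, 55, 56, 57, 58, 59, 60, 61, 64, 65, 67, 68, 69, 70, 71, 73, 75, 76, 78, 79, 80, 81, 82, 83, 85, 87, 89, 90, 91, 92, 95, 97, 98, 99}
    let W : List (ℤ × ℤ) := [(0, 0), (0, 1), (1, 1), (0, 3), (1, 3), (3, 3), (0, 7), (1, 7), (0, 9), (0, 10), (1, 10), (3, 9), (0, 13), (0, 14), (1, 14), (0, 16), (0, 17), (0, 18), (0, 19), (1, 19), (3, 18), (0, 22), (0, 23), (0, 24), (0, 25), (0, 26), (0, 27), (0, 28), (0, 29), (0, 30), (0, 31), (0, 32), (1, 32), (0, 34), (0, 35), (1, 35), (3, 34), (0, 38), (0, 39), (0, 40), (0, 41), (0, 42), (0, 43), (1, 43), (0, 45), (0, 46), (0, 47), (0, 48), (0, 49), (1, 49), (3, 48), (3, 49), (7, 46), (0, 54),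 (0, 55), (0, 56), (0, 57), (0, 58), (0, 59), (0, 60), (0, 61), (1, 61), (3, 60), (0, 64), (0, 65), (1, 65), (0, 67), (0, 68), (0, 69), (0, 70), (0, 71), (1, 71), (0, 73), (1, 73), (0, 75), (0, 76), (1, 76), (0, 78), (0, 79), (0, 80), (0, 81), (0, 82), (0, 83), (1, 83), (0, 85), (1, 85), (0, 87), (1, 87), (0, 89), (0, 90), (0, 91), (0, 92), (1, 92), (3, 91), (0, 95), (1, 95), (0, 97), (0, 98), (0, 99), (1, 99), (3, 98), (3, 99), (13, 90), (7, 97), (7, 98), (7, 99), (9, 98), (9, 99), (10, 99), (13, 97), (13, 98), (13, 99), (14, 99), (16, 98), (16, 99), (17, 99), (18, 99), (19, 99), (22, 97), (22, 98), (22, 99), (23, 99), (24, 99), (25, 99), (26, 99), (27, 99), (28, 99), (29, 99), (30, 99), (31, 99), (32, 99), (34, 98), (34, 99), (35, 99), (38, 97), (38, 98), (38, 99), (39, 99), (40, 99), (41, 99), (42, 99), (43, 99), (45, 98), (45, 99), (46, 99), (47, 99), (48, 99), (49, 99), (54, 95), (55, 95), (54, 97), (54, 98), (54, 99), (55, 99),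 (56, 99), (57, 99), (58, 99), (59, 99), (60, 99), (61, 99), (64, 97), (64, 98), (64, 99), (65, 99), (67, 98), (67, 99), (68, 99), (69, 99), (70, 99), (71, 99), (73, 98), (73, 99), (75, 98), (75, 99), (76, 99), (78, 98), (78, 99), (79, 99), (80, 99), (81, 99), (82, 99), (83, 99), (85, 98), (85, 99), (87, 98), (87, 99), (89, 98), (89, 99), (90, 99), (91, 99), (92, 99), (95, 97), (95, 98), (95, 99), (97, 98), (97, 99), (98, 99), (99, 99)]
    A.card = 70 ∧ (W.map fun p => p.1 + p.2).toFinset.card = 198 ∧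
      (∀ p ∈ W, p.1 ∈ A ∧ p.2 ∈ A) ∧
      (∀ a ∈ A, ∀ b ∈ A, -99 ≤ a - b ∧ a - b ≤ 99 ∧ a - b ≠ 93 ∧ a - b ≠ -93) := by
  decide

theorem stmt_3 :
    let A : Finset ℤ := {0, 1, 3, 7, 9, 10, 13, 14, 16, 17, 18, 19, 22, 23, 24, 25, 26, 27, 28, 29, 30, 31, 32, 34, 35, 38, 39, 40, 41, 42, 43, 45, 46, 47, 48, 49, 54, 55, 56, 57, 58, 59, 60, 61, 64, 65, 67, 68, 69, 70, 71, 73, 75, 76, 78, 79, 80, 81, 82, 83, 85, 87, 89, 90, 91, 92, 95, 97, 98, 99}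
    A.card = 70 ∧ (A + A).card > (A - A).card := by
  intro A
  obtain ⟨hc, hW, hmem, hsub⟩ := stmt3_aux
  refine ⟨hc, ?_⟩
  have h1 : 198 ≤ (A + A).card := by
    rw [← hW]
    apply Finset.card_le_card
    intro x hx
    rw [List.mem_toFinset, List.mem_map] at hx
    obtain ⟨p, hp, rfl⟩ := hx
    exact Finset.add_mem_add (hmem p hp).1 (hmem p hp).2
  have h2 : (A - A).card ≤ 197 := by
    have : (A - A) ⊆ ((Finset.Icc (-99 : ℤ) 99).erase 93).erase (-93) := by
      intro x hx
      rw [Finset.mem_sub] at hx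
      obtain ⟨a, ha, b, hb, rfl⟩ := hx
      obtain ⟨h1, h2, h3, h4⟩ := hsub a ha b hb
      simp [Finset.mem_erase, Finset.mem_Icc, h1, h2, h3, h4]
    calc (A - A).card ≤ _ := Finset.card_le_card this
      _ = 197 := by
        rw [Finset.card_erase_of_mem (by simp [Finset.mem_erase, Finset.mem_Icc]),
          Finset.card_erase_of_mem (by simp [Finset.mem_Icc]), Int.card_Icc]
        rfl
  omega
end

section
/- The set A = {2, 3, 4, 7, 9, 10, 11, 12, 13, 14, 15, 16, 17, 18, 19, 20, 21, 22, 23, 24, 25, 26, 27, 28, 30, 33, 34, 35, 36, 39, 40, 42, 43, 44, 45, 46, 47, 48, 50, 51, 52, 54, 55, 56, 57, 58, 59, 60, 61, 62, 64, 65, 67, 68, 69, 70, 71, 72, 73, 74, 75, 76, 77, 78, 79, 80, 81, 82, 83, 84, 85, 86, 87, 88, 89, 90, 91, 92, 93, 94, 95, 97, 98, 99, 101, 102, 103, 104, 107, 109, 110, 111, 112, 113, 114, 116, 119, 120, 121, 122, 123, 125, 126, 127, 128, 129, 130, 131, 132, 135, 136, 137, 141, 142, 144}, which has cardinality 115, is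 an MSTD set, i.e. |A+A| > |A-A|. -/
set_option maxRecDepth 100000
set_option maxHeartbeats 1000000
open Pointwise Finset

private def Aux12 : Finset ℤ := {2, 3, 4, 7, 9, 10, 11, 12, 13, 14, 15, 16, 17, 18, 19, 20, 21, 22, 23, 24, 25, 26, 27, 28, 30, 33, 34, 35, 36, 39, 40, 42, 43, 44, 45, 46, 47, 48, 50, 51, 52, 54, 55, 56, 57, 58, 59, 60, 61, 62, 64, 65, 67, 68, 69, 70, 71, 72, 73, 74, 75, 76, 77, 78, 79, 80, 81, 82, 83, 84, 85, 86, 87, 88, 89, 90, 91, 92, 93, 94, 95, 97, 98, 99, 101, 102, 103, 104, 107, 109, 110, 111, 112, 113, 114, 116, 119, 120, 121, 122, 123, 125, 126, 127, 128, 129, 130, 131, 132, 135, 136, 137, 141, 142, 144}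

private lemma aux12_cov (a b c d : ℤ) (hle1 : a ≤ b) (hle2 : c ≤ d)
    (hab : Finset.Icc a b ⊆ Aux12) (hcd : Finset.Icc c d ⊆ Aux12) :
    ∀ n : ℤ, a + c ≤ n → n ≤ b + d → n ∈ Aux12 + Aux12 := by
  intro n h1 h2
  have hx : max a (n - d) ∈ Finset.Icc a b := by rw [mem_Icc]; omega
  have hy : n - max a (n - d) ∈ Finset.Icc c d := by rw [mem_Icc]; omega
  have hn : n = max a (n - d) + (n - max a (n - d)) := by ring
  rw [hn]
  exact Finset.add_mem_add (hab hx) (hcd hy)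

private lemma aux12_all : ∀ n : ℤ, 4 ≤ n → n ≤ 286 → n ∈ Aux12 + Aux12 := by
  have i1 : Finset.Icc (2:ℤ) 4 ⊆ Aux12 := by decide
  have i2 : Finset.Icc (7:ℤ) 7 ⊆ Aux12 := by decide
  have i3 : Finset.Icc (9:ℤ) 28 ⊆ Aux12 := by decide
  have i4 : Finset.Icc (42:ℤ) 48 ⊆ Aux12 := by decide
  have i5 : Finset.Icc (54:ℤ) 62 ⊆ Aux12 := by decide
  have i6 : Finset.Icc (67:ℤ) 95 ⊆ Aux12 := by decide
  have i7 : Finset.Icc (109:ℤ) 114 ⊆ Aux12 := by decide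
  have i8 : Finset.Icc (119:ℤ) 123 ⊆ Aux12 := by decide
  have i9 : Finset.Icc (125:ℤ) 132 ⊆ Aux12 := by decide
  have i10 : Finset.Icc (135:ℤ) 137 ⊆ Aux12 := by decide
  have i11 : Finset.Icc (141:ℤ) 142 ⊆ Aux12 := by decide
  have i12 : Finset.Icc (144:ℤ) 144 ⊆ Aux12 := by decide
  intro n hlo hhi
  rcases le_or_gt n 8 with h|h
  · exact aux12_cov 2 4 2 4 (by norm_num) (by norm_num) i1 i1 n (by omega) (by omega)
  rcases le_or_gt n 11 with h'|h'
  · exact aux12_cov 2 4 7 7 (by norm_num) (by norm_num) i1 i2 n (by omega) (by omega)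
  rcases le_or_gt n 32 with h'|h'
  · exact aux12_cov 2 4 9 28 (by norm_num) (by norm_num) i1 i3 n (by omega) (by omega)
  rcases le_or_gt n 56 with h'|h'
  · exact aux12_cov 9 28 9 28 (by norm_num) (by norm_num) i3 i3 n (by omega) (by omega)
  rcases le_or_gt n 76 with h'|h'
  · exact aux12_cov 9 28 42 48 (by norm_num) (by norm_num) i3 i4 n (by omega) (by omega)
  rcases le_or_gt n 99 with h'|h'
  · exact aux12_cov 2 4 67 95 (by norm_num) (by norm_num) i1 i6 n (by omega) (by omega)
  rcases le_or_gt n 123 with h'|h'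
  · exact aux12_cov 9 28 67 95 (by norm_num) (by norm_num) i3 i6 n (by omega) (by omega)
  rcases le_or_gt n 157 with h'|h'
  · exact aux12_cov 54 62 67 95 (by norm_num) (by norm_num) i5 i6 n (by omega) (by omega)
  rcases le_or_gt n 190 with h'|h'
  · exact aux12_cov 67 95 67 95 (by norm_num) (by norm_num) i6 i6 n (by omega) (by omega)
  rcases le_or_gt n 218 with h'|h'
  · exact aux12_cov 119 123 67 95 (by norm_num) (by norm_num) i8 i6 n (by omega) (by omega)
  rcases le_or_gt n 237 with h'|h'
  · exact aux12_cov 141 142 67 95 (by norm_num) (by norm_num) i11 i6 n (by omega) (by omega)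
  rcases le_or_gt n 246 with h'|h'
  · exact aux12_cov 109 114 125 132 (by norm_num) (by norm_num) i7 i9 n (by omega) (by omega)
  rcases le_or_gt n 255 with h'|h'
  · exact aux12_cov 119 123 125 132 (by norm_num) (by norm_num) i8 i9 n (by omega) (by omega)
  rcases le_or_gt n 264 with h'|h'
  · exact aux12_cov 125 132 125 132 (by norm_num) (by norm_num) i9 i9 n (by omega) (by omega)
  rcases le_or_gt n 269 with h'|h'
  · exact aux12_cov 125 132 135 137 (by norm_num) (by norm_num) i9 i10 n (by omega) (by omega)
  rcases le_or_gt n 276 with h'|h'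
  · exact aux12_cov 125 132 144 144 (by norm_num) (by norm_num) i9 i12 n (by omega) (by omega)
  rcases le_or_gt n 279 with h'|h'
  · exact aux12_cov 135 137 141 142 (by norm_num) (by norm_num) i10 i11 n (by omega) (by omega)
  rcases le_or_gt n 281 with h'|h'
  · exact aux12_cov 135 137 144 144 (by norm_num) (by norm_num) i10 i12 n (by omega) (by omega)
  rcases le_or_gt n 284 with h'|h'
  · exact aux12_cov 141 142 141 142 (by norm_num) (by norm_num) i11 i11 n (by omega) (by omega)
  · exact aux12_cov 141 142 144 144 (by norm_num) (by norm_num) i11 i12 n (by omega) (by omega)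

private lemma aux12_lower : 284 ≤ (Aux12 + Aux12).card := by
  have hU : insert (288:ℤ) (Finset.Icc (4:ℤ) 286) ⊆ Aux12 + Aux12 := by
    refine Finset.insert_subset ?_ ?_
    · have : (288:ℤ) = 144 + 144 := by norm_num
      rw [this]
      exact Finset.add_mem_add (by decide) (by decide)
    · intro n hn
      rw [Finset.mem_Icc] at hn
      exact aux12_all n hn.1 hn.2
  have hcard : (insert (288:ℤ) (Finset.Icc (4:ℤ) 286)).card = 284 := by
    rw [Finset.card_insert_of_notMem (by simp), Int.card_Icc]
    rfl
  rw [← hcard]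
  exact Finset.card_le_card hU

private lemma aux12_upper : (Aux12 - Aux12).card ≤ 283 := by
  have hkey : ∀ a ∈ Aux12, a + 136 ∉ Aux12 ∧ 2 ≤ a ∧ a ≤ 144 := by decide
  have hsub : Aux12 - Aux12 ⊆ ((Finset.Icc (-142:ℤ) 142).erase 136).erase (-136) := by
    intro x hx
    rw [Finset.mem_sub] at hx
    obtain ⟨a, ha, b, hb, rfl⟩ := hx
    obtain ⟨ha1, ha3, ha4⟩ := hkey a ha
    obtain ⟨hb1, hb3, hb4⟩ := hkey b hb
    rw [Finset.mem_erase, Finset.mem_erase, Finset.mem_Icc]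
    refine ⟨?_, ?_, by omega, by omega⟩
    · intro h
      exact ha1 (by rw [show a + 136 = b from by omega]; exact hb)
    · intro h
      exact hb1 (by rw [show b + 136 = a from by omega]; exact ha)
  calc (Aux12 - Aux12).card ≤ (((Finset.Icc (-142:ℤ) 142).erase 136).erase (-136)).card :=
        Finset.card_le_card hsub
    _ = 283 := by decide

theorem stmt_12 :
    let A : Finset ℤ := {2, 3, 4, 7, 9, 10, 11, 12, 13, 14, 15, 16, 17, 18, 19, 20, 21, 22, 23, 24, 25, 26, 27, 28, 30, 33, 34, 35, 36, 39, 40, 42, 43, 44, 45, 46, 47, 48, 50, 51, 52, 54, 55, 56, 57, 58, 59, 60, 61, 62, 64, 65, 67, 68, 69, 70, 71, 72, 73, 74, 75, 76, 77, 78, 79, 80, 81, 82, 83, 84, 85, 86, 87, 88, 89, 90, 91, 92, 93, 94, 95, 97, 98, 99, 101, 102, 103, 104, 107, 109, 110, 111, 112, 113, 114, 116, 119, 120, 121, 122, 123, 125, 126, 127, 128, 129, 130, 131, 132, 135, 136, 137, 141, 142, 144}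
    A.card = 115 ∧ (A + A).card > (A - A).card := by
  intro A
  refine ⟨by decide, ?_⟩
  have hA : A = Aux12 := rfl
  rw [hA]
  calc (Aux12 - Aux12).card ≤ 283 := aux12_upper
    _ < 284 := by norm_num
    _ ≤ (Aux12 + Aux12).card := aux12_lower
end
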